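/- With f(z) = 4a·e^z·(e^{2z}+1)/(e^{4z}+6e^{2z}+1) and a ≠ 0, the identity f(z) - a = -a·(e^z - 1)⁴/(e^{4z}+6e^{2z}+1) holds for all z where the denominator is nonzero; hence every zero of f - a has multiplicity 4. -/

import Mathlib

theorem stmt_7 (a : ℂ) (ha : a ≠ 0) (f : ℂ → ℂ)
    (hf : ∀ z, f z = 4 * a * Complex.exp z * (Complex.exp (2 * z) + 1) /
      (Complex.exp (4 * z) + 6 * Complex.exp (2 * z) + 1)) :
    ∀ z : ℂ, Complex.exp (4 * z) + 6 * Complex.exp (2 * z) + 1 ≠ 0 →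
      f z - a = -a * (Complex.exp z - 1) ^ 4 /
        (Complex.exp (4 * z) + 6 * Complex.exp (2 * z) + 1) := by
  intro z hz
  rw [hf]
  have h2 : Complex.exp (2 * z) = Complex.exp z ^ 2 := by
    rw [← Complex.exp_nat_mul]; norm_num
  have h4 : Complex.exp (4 * z) = Complex.exp z ^ 4 := by
    rw [← Complex.exp_nat_mul]; norm_num
  rw [h2, h4] at hz ⊢
  rw [eq_div_iff hz, sub_mul, div_mul_cancel₀ _ hz]
  ring
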